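/- For N×N Hermitian positive-definite X and Hermitian H, the derivative of ε ↦ Log(X + εH) at ε = 0 equals ∫₀¹ [(X - I)s + I]^{-1} H [(X - I)s + I]^{-1} ds. -/

import Mathlib

open Matrix
open scoped ComplexOrder

/-- The principal matrix logarithm of a Hermitian (positive-definite) matrix, defined via the
spectral decomposition; junk value `0` on non-Hermitian matrices. -/
noncomputable def matLog {N : ℕ} (X : Matrix (Fin N) (Fin N) ℂ) : Matrix (Fin N) (Fin N) ℂ :=
  if hX : X.IsHermitian then
    (hX.eigenvectorUnitary : Matrix (Fin N) (Fin N) ℂ) *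
      Matrix.diagonal (fun i => (Real.log (hX.eigenvalues i) : ℂ)) *
      star (hX.eigenvectorUnitary : Matrix (Fin N) (Fin N) ℂ)
  else 0

attribute [local instance] Matrix.frobeniusNormedAddCommGroup Matrix.frobeniusNormedSpace

section Aux

attribute [local instance] Matrix.frobeniusNormedRing Matrix.frobeniusNormedAlgebra

noncomputable abbrev matENormedAddCommMonoid {N : ℕ} : ENormedAddCommMonoid (Matrix (Fin N) (Fin N) ℂ) :=
  NormedAddCommGroup.toENormedAddCommMonoid

noncomputable abbrev matPseudoMetrizable {N : ℕ} :
    TopologicalSpace.PseudoMetrizableSpace (Matrix (Fin N) (Fin N) ℂ) :=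
  (inferInstance : TopologicalSpace.PseudoMetrizableSpace (Fin N → Fin N → ℂ))

attribute [local instance] matENormedAddCommMonoid matPseudoMetrizable

lemma posDef_one' : (1 : Matrix (Fin N) (Fin N) ℂ).PosDef :=
  posDef_iff_dotProduct_mulVec.mpr ⟨isHermitian_one, fun x hx => by
    simpa only [one_mulVec] using dotProduct_star_self_pos_iff.mpr hx⟩

lemma Matrix.PosDef.real_smul {A : Matrix (Fin N) (Fin N) ℂ} (hA : A.PosDef) {s : ℝ}
    (hs : 0 < s) : (s • A).PosDef := by
  refine posDef_iff_dotProduct_mulVec.mpr ⟨by simpa [Matrix.IsHermitian, conjTranspose_smul] using congrArg (s • ·) hA.1, ?_⟩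
  intro x hx
  rw [smul_mulVec, dotProduct_smul]
  have h1 := hA.dotProduct_mulVec_pos hx
  have : (0:ℂ) < (s:ℂ) * (star x ⬝ᵥ A *ᵥ x) :=
    mul_pos (by exact_mod_cast Complex.zero_lt_real.mpr hs) h1
  simpa [Complex.real_smul] using this

lemma Matrix.PosSemidef.real_smul {A : Matrix (Fin N) (Fin N) ℂ} (hA : A.PosSemidef) {s : ℝ}
    (hs : 0 ≤ s) : (s • A).PosSemidef := by
  refine posSemidef_iff_dotProduct_mulVec.mpr ⟨by simpa [Matrix.IsHermitian, conjTranspose_smul] using congrArg (s • ·) hA.1, ?_⟩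
  intro x
  rw [smul_mulVec, dotProduct_smul]
  have h1 := hA.dotProduct_mulVec_nonneg x
  have : (0:ℂ) ≤ (s:ℂ) * (star x ⬝ᵥ A *ᵥ x) :=
    mul_nonneg (by exact_mod_cast Complex.zero_le_real.mpr hs) h1
  simpa [Complex.real_smul] using this

lemma posDef_line {A : Matrix (Fin N) (Fin N) ℂ} (hA : A.PosDef) {s : ℝ}
    (hs0 : 0 ≤ s) (hs1 : s ≤ 1) : (s • (A - 1) + 1).PosDef := by
  have key : s • (A - 1) + 1 = s • A + (1 - s) • (1 : Matrix (Fin N) (Fin N) ℂ) := by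
    rw [smul_sub, sub_smul, one_smul]; abel
  rw [key]
  rcases eq_or_lt_of_le hs0 with h | h
  · simp only [← h, zero_smul, zero_add, sub_zero, one_smul]
    exact posDef_one'
  · exact (hA.real_smul h).add_posSemidef ((posDef_one'.posSemidef).real_smul (by linarith))

lemma posDef_line_isUnit {A : Matrix (Fin N) (Fin N) ℂ} (hA : A.PosDef) {s : ℝ}
    (hs0 : 0 ≤ s) (hs1 : s ≤ 1) : IsUnit (s • (A - 1) + 1) :=
  (posDef_line hA hs0 hs1).isUnit

variable {N : ℕ}

lemma real_smul_matrix (s : ℝ) (M : Matrix (Fin N) (Fin N) ℂ) : s • M = (s : ℂ) • M := by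
  ext i j; simp [Complex.real_smul]

/-- conjugation by U as a continuous linear map -/
noncomputable def conjCLM (U : Matrix (Fin N) (Fin N) ℂ) :
    Matrix (Fin N) (Fin N) ℂ →L[ℂ] Matrix (Fin N) (Fin N) ℂ :=
  LinearMap.toContinuousLinearMap
    { toFun := fun M => U * M * star U
      map_add' := fun M₁ M₂ => by noncomm_ring
      map_smul' := fun c M => by simp [mul_smul_comm, smul_mul_assoc] }

@[simp] lemma conjCLM_apply (U M : Matrix (Fin N) (Fin N) ℂ) :
    conjCLM U M = U * M * star U := rfl

noncomputable def entryCLM (i j : Fin N) :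
    Matrix (Fin N) (Fin N) ℂ →L[ℂ] ℂ :=
  LinearMap.toContinuousLinearMap
    { toFun := fun M => M i j
      map_add' := fun M₁ M₂ => rfl
      map_smul' := fun c M => rfl }

lemma intervalIntegral_apply {f : ℝ → Matrix (Fin N) (Fin N) ℂ} {a b : ℝ}
    (hf : IntervalIntegrable f MeasureTheory.volume a b) (i j : Fin N) :
    (∫ t in a..b, f t) i j = ∫ t in a..b, f t i j :=
  ((entryCLM i j).intervalIntegral_comp_comm hf).symm

lemma denom_pos' {c s : ℝ} (hc : -1 < c) (hs0 : 0 ≤ s) (hs1 : s ≤ 1) : 0 < s * c + 1 := by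
  rcases le_or_gt c 0 with h | h
  · have := mul_le_mul_of_nonpos_right hs1 h
    simp only [one_mul] at this
    linarith
  · nlinarith

lemma conj_mul_conj {U M P : Matrix (Fin N) (Fin N) ℂ} (hUU' : star U * U = 1) :
    (U * M * star U) * (U * P * star U) = U * (M * P) * star U := by
  have h : (U * M * star U) * (U * P * star U) = U * M * (star U * U) * P * star U := by
    noncomm_ring
  rw [h, hUU', mul_one, mul_assoc U M P]

lemma conj_smul (c : ℂ) (U M : Matrix (Fin N) (Fin N) ℂ) :
    c • (U * M * star U) = U * (c • M) * star U := by
  rw [Matrix.mul_smul, Matrix.smul_mul]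


noncomputable def diagCLM : (Fin N → ℂ) →L[ℂ] Matrix (Fin N) (Fin N) ℂ :=
  LinearMap.toContinuousLinearMap
    { toFun := fun v => Matrix.diagonal v
      map_add' := fun v w => (Matrix.diagonal_add v w).symm
      map_smul' := fun c v => Matrix.diagonal_smul c v }

lemma scalar_log_integral {c : ℝ} (hc : -1 < c) :
    ∫ s in (0:ℝ)..1, c / (s * c + 1) = Real.log (c + 1) := by
  have huIcc : Set.uIcc (0:ℝ) 1 = Set.Icc 0 1 := Set.uIcc_of_le zero_le_one
  have hderiv : ∀ s ∈ Set.uIcc (0:ℝ) 1,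
      HasDerivAt (fun t => Real.log (t * c + 1)) (c / (s * c + 1)) s := by
    intro s hs
    rw [huIcc] at hs
    have hne : s * c + 1 ≠ 0 := (denom_pos' hc hs.1 hs.2).ne'
    have h1 : HasDerivAt (fun t : ℝ => t * c + 1) c s := by
      simpa using ((hasDerivAt_id s).mul_const c).add_const 1
    have := (Real.hasDerivAt_log hne).comp s h1
    simpa [div_eq_inv_mul, Function.comp_def] using this
  have hcont : ContinuousOn (fun s : ℝ => c / (s * c + 1)) (Set.uIcc (0:ℝ) 1) := by
    rw [huIcc]
    exact continuousOn_const.div (by fun_prop)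
      (fun s hs => (denom_pos' hc hs.1 hs.2).ne')
  have h := intervalIntegral.integral_eq_sub_of_hasDerivAt hderiv hcont.intervalIntegrable
  simpa using h

lemma matLog_eq_integral {A : Matrix (Fin N) (Fin N) ℂ} (hA : A.PosDef) :
    matLog A = ∫ s in (0:ℝ)..1, (A - 1) * (s • (A - 1) + 1)⁻¹ := by
  have hHerm := hA.1
  set U : Matrix (Fin N) (Fin N) ℂ := (hHerm.eigenvectorUnitary : Matrix (Fin N) (Fin N) ℂ) with hU
  set lam : Fin N → ℝ := hHerm.eigenvalues with hlamdef
  have hlam : ∀ i, 0 < lam i := fun i => hA.eigenvalues_pos i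
  have hUU : U * star U = 1 := (Matrix.mem_unitaryGroup_iff).mp (hHerm.eigenvectorUnitary).2
  have hUU' : star U * U = 1 := (Matrix.mem_unitaryGroup_iff').mp (hHerm.eigenvectorUnitary).2
  set d : ℝ → Matrix (Fin N) (Fin N) ℂ :=
    fun s => Matrix.diagonal (fun i => (((lam i - 1) / (s * (lam i - 1) + 1) : ℝ) : ℂ)) with hd
  have hone : (1 : Matrix (Fin N) (Fin N) ℂ) = U * 1 * star U := by rw [mul_one, hUU]
  have hA1 : A - 1 = U * Matrix.diagonal (fun i => ((lam i : ℂ) - 1)) * star U := by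
    have hspec := hHerm.spectral_theorem
    calc A - 1 = U * Matrix.diagonal (RCLike.ofReal ∘ lam) * star U - U * 1 * star U := by
          rw [mul_one, hUU]
          conv_lhs => rw [hspec]
          simp [Unitary.conjStarAlgAut_apply, U, lam]
      _ = U * Matrix.diagonal (fun i => ((lam i : ℂ) - 1)) * star U := by
          rw [← Matrix.diagonal_one, ← sub_mul, ← mul_sub, Matrix.diagonal_sub]
          rfl
  have hconj : ∀ s ∈ Set.Icc (0:ℝ) 1,
      (A - 1) * (s • (A - 1) + 1)⁻¹ = U * d s * star U := by
    intro s hs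
    have hM : s • (A - 1) + 1
        = U * Matrix.diagonal (fun i => ((s * (lam i - 1) + 1 : ℝ) : ℂ)) * star U := by
      rw [real_smul_matrix, hA1, conj_smul]
      conv_lhs => rw [hone]
      rw [← add_mul, ← mul_add]
      congr 2
      rw [← Matrix.diagonal_smul, ← Matrix.diagonal_one, Matrix.diagonal_add]
      congr 1
      funext i
      push_cast
      simp [smul_eq_mul]
    have hne : ∀ i, ((s * (lam i - 1) + 1 : ℝ) : ℂ) ≠ 0 := by
      intro i
      exact_mod_cast (denom_pos' (by linarith [hlam i]) hs.1 hs.2).ne'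
    have hMinv : (s • (A - 1) + 1)⁻¹
        = U * Matrix.diagonal (fun i => (((s * (lam i - 1) + 1 : ℝ) : ℂ))⁻¹) * star U := by
      apply Matrix.inv_eq_right_inv
      rw [hM, conj_mul_conj hUU', Matrix.diagonal_mul_diagonal]
      have : (fun i => ((s * (lam i - 1) + 1 : ℝ) : ℂ) * (((s * (lam i - 1) + 1 : ℝ) : ℂ))⁻¹)
          = fun _ => (1:ℂ) := by
        funext i; exact mul_inv_cancel₀ (hne i)
      rw [this, Matrix.diagonal_one, mul_one, hUU]
    rw [hMinv, hA1, conj_mul_conj hUU', Matrix.diagonal_mul_diagonal]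
    have hds : (Matrix.diagonal fun i => ((lam i : ℂ) - 1) * (((s * (lam i - 1) + 1 : ℝ) : ℂ))⁻¹)
        = d s := by
      rw [hd]
      congr 1
      funext i
      push_cast [div_eq_mul_inv]
      ring
    rw [hds]
  -- integrability of d
  have hdcont : ContinuousOn d (Set.uIcc (0:ℝ) 1) := by
    rw [Set.uIcc_of_le zero_le_one]
    have hv : ContinuousOn
        (fun s : ℝ => fun i => (((lam i - 1) / (s * (lam i - 1) + 1) : ℝ) : ℂ))
        (Set.Icc (0:ℝ) 1) := by
      apply continuousOn_pi.2
      intro i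
      apply Complex.continuous_ofReal.comp_continuousOn
      exact continuousOn_const.div (by fun_prop)
        (fun s hs => (denom_pos' (by linarith [hlam i]) hs.1 hs.2).ne')
    exact (diagCLM.continuous.comp_continuousOn hv : _)
  have hdint : IntervalIntegrable d MeasureTheory.volume 0 1 := hdcont.intervalIntegrable
  have hInt : (∫ s in (0:ℝ)..1, (A - 1) * (s • (A - 1) + 1)⁻¹)
      = ∫ s in (0:ℝ)..1, U * d s * star U :=
    intervalIntegral.integral_congr
      (fun s hs => hconj s (by rwa [Set.uIcc_of_le zero_le_one] at hs))
  have hpull : (∫ s in (0:ℝ)..1, U * d s * star U) = U * (∫ s in (0:ℝ)..1, d s) * star U := by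
    have h := (conjCLM U).intervalIntegral_comp_comm hdint
    exact h
  have hdiag : (∫ s in (0:ℝ)..1, d s) = Matrix.diagonal (fun i => (Real.log (lam i) : ℂ)) := by
    ext i j
    rw [intervalIntegral_apply hdint i j]
    by_cases hij : i = j
    · subst hij
      simp only [hd, Matrix.diagonal_apply_eq]
      have h2 := RCLike.intervalIntegral_ofReal (𝕜 := ℂ) (μ := MeasureTheory.volume)
        (a := 0) (b := 1) (f := fun t => (lam i - 1) / (t * (lam i - 1) + 1))
      refine h2.trans ?_
      rw [scalar_log_integral (by linarith [hlam i] : (-1:ℝ) < lam i - 1)]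
      norm_num
    · simp only [hd, Matrix.diagonal_apply_ne _ hij]
      simp
  rw [hInt, hpull, hdiag]
  simp only [matLog, dif_pos hHerm]
  rfl

lemma herm_quad_real {M : Matrix (Fin N) (Fin N) ℂ} (hM : M.IsHermitian) (x : Fin N → ℂ) :
    (star x ⬝ᵥ M *ᵥ x).im = 0 := by
  have h : (starRingEnd ℂ) (star x ⬝ᵥ M *ᵥ x) = star x ⬝ᵥ M *ᵥ x := by
    have h1 : star (star x ⬝ᵥ M *ᵥ x) = star (M *ᵥ x) ⬝ᵥ star (star x) := (star_dotProduct_star (M *ᵥ x) (star x)).symm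
    rw [star_star] at h1
    rw [starRingEnd_apply, h1, star_mulVec, hM.eq]
    exact (dotProduct_mulVec _ _ _).symm
  exact Complex.conj_eq_iff_im.mp h

lemma quad_scale (M : Matrix (Fin N) (Fin N) ℂ) (t : ℝ) (u : Fin N → ℂ) :
    (star (t • u) ⬝ᵥ M *ᵥ (t • u)).re = t * t * (star u ⬝ᵥ M *ᵥ u).re := by
  have h1 : star (t • u) = t • star u := by
    rw [star_smul, star_trivial]
  rw [h1, mulVec_smul, smul_dotProduct, dotProduct_smul]
  simp [Complex.real_smul, Complex.mul_re]
  ring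

lemma quad_continuous (M : Matrix (Fin N) (Fin N) ℂ) :
    Continuous (fun x : Fin N → ℂ => (star x ⬝ᵥ M *ᵥ x).re) := by
  apply Complex.continuous_re.comp
  simp only [dotProduct, Matrix.mulVec]
  fun_prop

lemma exists_posdef_nbhd {X H : Matrix (Fin N) (Fin N) ℂ} (hX : X.PosDef) (hH : H.IsHermitian) :
    ∃ δ : ℝ, 0 < δ ∧ ∀ ε : ℝ, |ε| < δ → (X + ε • H).PosDef := by
  have hherm : ∀ ε : ℝ, (X + ε • H).IsHermitian := by
    intro ε
    refine hX.1.add ?_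
    show (ε • H)ᴴ = ε • H
    rw [conjTranspose_smul, star_trivial, hH.eq]
  have hquad : ∀ (ε : ℝ) (x : Fin N → ℂ),
      (star x ⬝ᵥ (X + ε • H) *ᵥ x).re
        = (star x ⬝ᵥ X *ᵥ x).re + ε * (star x ⬝ᵥ H *ᵥ x).re := by
    intro ε x
    rw [add_mulVec, dotProduct_add, smul_mulVec, dotProduct_smul]
    simp [Complex.real_smul, Complex.mul_re]
  by_cases htriv : ∀ x : Fin N → ℂ, x = 0
  · exact ⟨1, one_pos, fun ε _ => posDef_iff_dotProduct_mulVec.mpr ⟨hherm ε, fun x hx => absurd (htriv x) hx⟩⟩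
  · push_neg at htriv
    obtain ⟨y, hy⟩ := htriv
    have hyn : ‖y‖ ≠ 0 := norm_ne_zero_iff.mpr hy
    have hsph : ((Metric.sphere (0 : Fin N → ℂ) 1) : Set (Fin N → ℂ)).Nonempty :=
      ⟨‖y‖⁻¹ • y, by simp [norm_smul, inv_mul_cancel₀ hyn]⟩
    have hS : IsCompact (Metric.sphere (0 : Fin N → ℂ) 1) := isCompact_sphere 0 1
    obtain ⟨x₀, hx₀S, hmin⟩ := hS.exists_isMinOn hsph (quad_continuous X).continuousOn
    obtain ⟨y₀, hy₀S, hmax⟩ := hS.exists_isMaxOn hsph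
      ((continuous_abs.comp (quad_continuous H)).continuousOn)
    set c : ℝ := (star x₀ ⬝ᵥ X *ᵥ x₀).re with hc
    set C : ℝ := |(star y₀ ⬝ᵥ H *ᵥ y₀).re| with hC
    have hx₀ne : x₀ ≠ 0 := by
      intro h0
      rw [Metric.mem_sphere, h0] at hx₀S
      simp at hx₀S
    have hcpos : 0 < c := hX.re_dotProduct_pos hx₀ne
    have hCnn : 0 ≤ C := abs_nonneg _
    refine ⟨c / (C + 1), div_pos hcpos (by linarith), ?_⟩
    intro ε hε
    refine posDef_iff_dotProduct_mulVec.mpr ⟨hherm ε, fun x hx => ?_⟩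
    have hxn : ‖x‖ ≠ 0 := norm_ne_zero_iff.mpr hx
    set u : Fin N → ℂ := ‖x‖⁻¹ • x with hu
    have huS : u ∈ Metric.sphere (0 : Fin N → ℂ) 1 := by
      simp [hu, norm_smul, inv_mul_cancel₀ hxn]
    have hxu : x = ‖x‖ • u := by
      rw [hu, smul_smul, mul_inv_cancel₀ hxn, one_smul]
    have hXu : c ≤ (star u ⬝ᵥ X *ᵥ u).re := hmin huS
    have hHu : |(star u ⬝ᵥ H *ᵥ u).re| ≤ C := hmax huS
    have hεb : |ε| * |(star u ⬝ᵥ H *ᵥ u).re| < c := by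
      calc |ε| * |(star u ⬝ᵥ H *ᵥ u).re| ≤ |ε| * (C + 1) :=
            mul_le_mul_of_nonneg_left (by linarith) (abs_nonneg ε)
        _ < (c / (C + 1)) * (C + 1) := mul_lt_mul_of_pos_right hε (by linarith)
        _ = c := div_mul_cancel₀ c (by linarith)
    have hre : 0 < (star x ⬝ᵥ (X + ε • H) *ᵥ x).re := by
      rw [hquad]
      have h1 : (star x ⬝ᵥ X *ᵥ x).re = ‖x‖ * ‖x‖ * (star u ⬝ᵥ X *ᵥ u).re := by
        conv_lhs => rw [hxu]
        exact quad_scale X ‖x‖ u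
      have h2 : (star x ⬝ᵥ H *ᵥ x).re = ‖x‖ * ‖x‖ * (star u ⬝ᵥ H *ᵥ u).re := by
        conv_lhs => rw [hxu]
        exact quad_scale H ‖x‖ u
      have hnpos : 0 < ‖x‖ * ‖x‖ := by
        have : 0 < ‖x‖ := (norm_nonneg x).lt_of_ne' hxn
        positivity
      have hkey : 0 < (star u ⬝ᵥ X *ᵥ u).re + ε * (star u ⬝ᵥ H *ᵥ u).re := by
        have h3 := neg_abs_le (ε * (star u ⬝ᵥ H *ᵥ u).re)
        have h4 : |ε * (star u ⬝ᵥ H *ᵥ u).re| = |ε| * |(star u ⬝ᵥ H *ᵥ u).re| := abs_mul _ _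
        linarith
      rw [h1, h2]
      calc (0:ℝ) < ‖x‖ * ‖x‖ * ((star u ⬝ᵥ X *ᵥ u).re + ε * (star u ⬝ᵥ H *ᵥ u).re) :=
            mul_pos hnpos hkey
        _ = ‖x‖ * ‖x‖ * (star u ⬝ᵥ X *ᵥ u).re + ε * (‖x‖ * ‖x‖ * (star u ⬝ᵥ H *ᵥ u).re) := by
            ring
    have him : (star x ⬝ᵥ (X + ε • H) *ᵥ x).im = 0 := herm_quad_real (hherm ε) x
    rw [Complex.lt_def]
    exact ⟨by simpa using hre, by simp [him]⟩


lemma deriv_matLog_aux {N : ℕ} (X H : Matrix (Fin N) (Fin N) ℂ)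
    (hX : X.PosDef) (hH : H.IsHermitian) :
    HasDerivAt (fun ε : ℝ => matLog (X + ε • H))
      (∫ s in (0 : ℝ)..1, ((s • (X - 1) + 1)⁻¹ * H * (s • (X - 1) + 1)⁻¹)) 0 := by
  obtain ⟨δ, hδ, hpd⟩ := exists_posdef_nbhd hX hH
  set Amat : ℝ → Matrix (Fin N) (Fin N) ℂ := fun ε => X + ε • H - 1 with hAmat
  set F : ℝ → ℝ → Matrix (Fin N) (Fin N) ℂ :=
    fun ε s => Amat ε * (s • Amat ε + 1)⁻¹ with hF
  set F' : ℝ → ℝ → Matrix (Fin N) (Fin N) ℂ :=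
    fun ε s => (s • Amat ε + 1)⁻¹ * H * (s • Amat ε + 1)⁻¹ with hF'
  set K : Set (ℝ × ℝ) := Set.Icc (0:ℝ) 1 ×ˢ Set.Icc (-(δ/2)) (δ/2) with hK
  have hδ2 : (0:ℝ) < δ/2 := by positivity
  have hpd' : ∀ ε : ℝ, |ε| ≤ δ/2 → (X + ε • H).PosDef := by
    intro ε hε
    exact hpd ε (lt_of_le_of_lt hε (by linarith))
  have hunit : ∀ p : ℝ × ℝ, p ∈ K → IsUnit (p.1 • Amat p.2 + 1) := by
    rintro ⟨s, ε⟩ ⟨hs, hε⟩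
    have habs : |ε| ≤ δ/2 := abs_le.mpr ⟨hε.1, hε.2⟩
    exact posDef_line_isUnit (hpd' ε habs) hs.1 hs.2
  have hMcont : Continuous (fun p : ℝ × ℝ => p.1 • Amat p.2 + 1) := by
    apply Continuous.add _ continuous_const
    exact continuous_fst.smul
      (((continuous_const.add (continuous_snd.smul continuous_const)).sub continuous_const))
  have hGcont : ContinuousOn (fun p : ℝ × ℝ => (p.1 • Amat p.2 + 1)⁻¹) K := by
    have heq : (fun p : ℝ × ℝ => (p.1 • Amat p.2 + 1)⁻¹)
        = fun p : ℝ × ℝ => Ring.inverse (p.1 • Amat p.2 + 1) := by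
      funext p
      rw [Matrix.nonsing_inv_eq_ringInverse]
    rw [heq]
    intro p hp
    have h1 := NormedRing.inverse_continuousAt (hunit p hp).unit
    rw [IsUnit.unit_spec] at h1
    have h2 : ContinuousAt (fun q : ℝ × ℝ => Ring.inverse (q.1 • Amat q.2 + 1)) p :=
      ContinuousAt.comp (x := p) (g := Ring.inverse) h1 hMcont.continuousAt
    exact h2.continuousWithinAt
  have hΦcont : ContinuousOn (fun p : ℝ × ℝ => F' p.2 p.1) K :=
    (hGcont.mul continuousOn_const).mul hGcont
  obtain ⟨C, hC⟩ := (isCompact_Icc.prod isCompact_Icc).exists_bound_of_continuousOn hΦcont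
  have huIoc : Set.uIoc (0:ℝ) 1 ⊆ Set.Icc (0:ℝ) 1 := by
    rw [Set.uIoc_of_le zero_le_one]
    exact Set.Ioc_subset_Icc_self
  -- continuity of `F ε` and `F' ε` in `s`, for `|ε| ≤ δ/2`
  have hmapsTo : ∀ ε : ℝ, |ε| ≤ δ/2 →
      Set.MapsTo (fun s : ℝ => (s, ε)) (Set.Icc (0:ℝ) 1) K := by
    intro ε hε s hs
    exact ⟨hs, abs_le.mp hε⟩
  have hFcont : ∀ ε : ℝ, |ε| ≤ δ/2 → ContinuousOn (F ε) (Set.Icc (0:ℝ) 1) := by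
    intro ε hε
    apply continuousOn_const.mul
    exact (hGcont.comp (Continuous.continuousOn (by fun_prop)) (hmapsTo ε hε) : _)
  have hF'cont : ∀ ε : ℝ, |ε| ≤ δ/2 → ContinuousOn (F' ε) (Set.Icc (0:ℝ) 1) := by
    intro ε hε
    exact (hΦcont.comp (Continuous.continuousOn (by fun_prop)) (hmapsTo ε hε) : _)
  -- the hypotheses of the dominated-derivative theorem
  have hF_meas : ∀ᶠ ε in nhds (0:ℝ),
      MeasureTheory.AEStronglyMeasurable (F ε)
        (MeasureTheory.volume.restrict (Set.uIoc (0:ℝ) 1)) := by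
    filter_upwards [Metric.ball_mem_nhds (0:ℝ) hδ2] with ε hε
    have habs : |ε| ≤ δ/2 := le_of_lt (by simpa [Real.norm_eq_abs] using mem_ball_zero_iff.mp hε)
    exact ContinuousOn.aestronglyMeasurable ((hFcont ε habs).mono huIoc) measurableSet_uIoc
  have hF_int : IntervalIntegrable (F 0) MeasureTheory.volume 0 1 := by
    apply ContinuousOn.intervalIntegrable
    rw [Set.uIcc_of_le zero_le_one]
    exact hFcont 0 (by simpa using le_of_lt hδ2)
  have hF'_meas : MeasureTheory.AEStronglyMeasurable (F' 0)
      (MeasureTheory.volume.restrict (Set.uIoc (0:ℝ) 1)) :=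
    ContinuousOn.aestronglyMeasurable
      ((hF'cont 0 (by simpa using le_of_lt hδ2)).mono huIoc) measurableSet_uIoc
  have h_bound : ∀ᵐ t ∂MeasureTheory.volume, t ∈ Set.uIoc (0:ℝ) 1 →
      ∀ x ∈ Metric.ball (0:ℝ) (δ/2), ‖F' x t‖ ≤ C := by
    apply Filter.Eventually.of_forall
    intro t ht x hx
    have habs : |x| ≤ δ/2 := le_of_lt (by simpa [Real.norm_eq_abs] using mem_ball_zero_iff.mp hx)
    exact hC (t, x) ⟨huIoc ht, abs_le.mp habs⟩
  have bound_integrable : IntervalIntegrable (fun _ : ℝ => C) MeasureTheory.volume 0 1 :=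
    intervalIntegrable_const
  have h_diff : ∀ᵐ t ∂MeasureTheory.volume, t ∈ Set.uIoc (0:ℝ) 1 →
      ∀ x ∈ Metric.ball (0:ℝ) (δ/2), HasDerivAt (fun x => F x t) (F' x t) x := by
    apply Filter.Eventually.of_forall
    intro s hs ε hε
    have hsIcc : s ∈ Set.Icc (0:ℝ) 1 := huIoc hs
    have habs : |ε| ≤ δ/2 := le_of_lt (by simpa [Real.norm_eq_abs] using mem_ball_zero_iff.mp hε)
    have hu : IsUnit (s • Amat ε + 1) := hunit (s, ε) ⟨hsIcc, abs_le.mp habs⟩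
    have hudet : IsUnit (s • Amat ε + 1).det := (Matrix.isUnit_iff_isUnit_det _).mp hu
    -- derivative of the affine path and of the inverse
    have hMd : HasDerivAt (fun x : ℝ => s • Amat x + 1) (s • H) ε := by
      have heq : (fun x : ℝ => s • Amat x + 1)
          = fun x : ℝ => x • (s • H) + (s • (X - 1) + 1) := by
        funext x
        show s • (X + x • H - 1) + 1 = _
        module
      rw [heq]
      have h := ((hasDerivAt_id' (x := ε)).smul_const (s • H)).add_const (s • (X - 1) + 1)
      rw [one_smul] at h
      exact h
    have hAd : HasDerivAt (fun x : ℝ => Amat x) H ε := by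
      have heq : (fun x : ℝ => Amat x) = fun x : ℝ => x • H + (X - 1) := by
        funext x
        show X + x • H - 1 = _
        module
      rw [heq]
      have h := ((hasDerivAt_id' (x := ε)).smul_const H).add_const (X - 1)
      rw [one_smul] at h
      exact h
    have hId : HasDerivAt (fun x : ℝ => (s • Amat x + 1)⁻¹)
        (-((s • Amat ε + 1)⁻¹ * (s • H) * (s • Amat ε + 1)⁻¹)) ε := by
      have hinv := hasFDerivAt_ringInverse (𝕜 := ℝ) hu.unit
      rw [IsUnit.unit_spec] at hinv
      have hcomp := hinv.comp_hasDerivAt ε hMd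
      have h1 : (fun x : ℝ => Ring.inverse (s • Amat x + 1))
          = fun x : ℝ => (s • Amat x + 1)⁻¹ := by
        funext x
        rw [Matrix.nonsing_inv_eq_ringInverse]
      simp only [Function.comp_def] at hcomp
      rw [h1] at hcomp
      simp [ContinuousLinearMap.mulLeftRight_apply, Matrix.coe_units_inv,
        IsUnit.unit_spec] at hcomp
      rw [Matrix.mul_smul, Matrix.smul_mul]
      exact hcomp
    have hprod := hAd.mul hId
    -- identify the derivative with `F' ε s`
    set Mi := (s • Amat ε + 1)⁻¹ with hMi
    have hmulinv : (s • Amat ε + 1) * Mi = 1 := Matrix.mul_nonsing_inv _ hudet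
    have h6 : (s • Amat ε) * Mi = 1 - Mi := by
      have h7 : s • Amat ε = (s • Amat ε + 1) - 1 := (add_sub_cancel_right _ _).symm
      rw [h7, sub_mul, hmulinv, one_mul]
    have h5 : Amat ε * (Mi * (s • H) * Mi) = (1 - Mi) * (H * Mi) := by
      rw [← h6]
      simp only [Matrix.mul_smul, Matrix.smul_mul]
      congr 1
      noncomm_ring
    have hval : H * Mi + Amat ε * -(Mi * (s • H) * Mi) = Mi * H * Mi := by
      rw [mul_neg, h5]
      noncomm_ring
    rw [hval] at hprod
    exact hprod
  -- apply the dominated-convergence differentiation theorem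
  have hder := (intervalIntegral.hasDerivAt_integral_of_dominated_loc_of_deriv_le (Metric.ball_mem_nhds 0 hδ2)
    hF_meas hF_int hF'_meas h_bound bound_integrable h_diff).2
  -- identify the derivative value
  have hF'0 : F' 0 = fun s : ℝ => (s • (X - 1) + 1)⁻¹ * H * (s • (X - 1) + 1)⁻¹ := by
    funext s
    show (s • (X + (0:ℝ) • H - 1) + 1)⁻¹ * H * (s • (X + (0:ℝ) • H - 1) + 1)⁻¹ = _
    rw [zero_smul, add_zero]
  rw [hF'0] at hder
  -- `matLog (X + ε H)` agrees with the parameter integral near `0`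
  refine hder.congr_of_eventuallyEq ?_
  filter_upwards [Metric.ball_mem_nhds (0:ℝ) hδ] with ε hε
  have hpde : (X + ε • H).PosDef :=
    hpd ε (by simpa [Real.norm_eq_abs] using mem_ball_zero_iff.mp hε)
  exact matLog_eq_integral hpde

end Aux

/-- For `N×N` Hermitian positive-definite `X` and Hermitian `H`, the derivative of
`ε ↦ Log(X + εH)` at `ε = 0` equals the Bochner integral
`∫₀¹ [(X - I)s + I]⁻¹ H [(X - I)s + I]⁻¹ ds`. -/
theorem deriv_matLog {N : ℕ} (X H : Matrix (Fin N) (Fin N) ℂ)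
    (hX : X.PosDef) (hH : H.IsHermitian) :
    HasDerivAt (fun ε : ℝ => matLog (X + ε • H))
      (∫ s in (0 : ℝ)..1, ((s • (X - 1) + 1)⁻¹ * H * (s • (X - 1) + 1)⁻¹)) 0 :=
  deriv_matLog_aux X H hX hH
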